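/- arXiv:2601.22854 — 2 statements merged into one kernel-verified Lean document; each statement's English description precedes it below -/
import Mathlib

section
/- The function Ψ_c(φ), defined as φ⁴ + 1 for φ ∈ (-β, β) and 2β²φ² - (β⁴ - 1) otherwise (with β > 1), is convex on ℝ. -/
theorem stmt_1 (β : ℝ) (hβ : 1 < β) (Ψc : ℝ → ℝ)
    (hΨc : ∀ φ : ℝ, Ψc φ = if |φ| < β then φ^4 + 1 else 2*β^2*φ^2 - (β^4 - 1)) :
    ConvexOn ℝ Set.univ Ψc := by
  have hβ0 : 0 < β := by linarith
  set g : ℝ → ℝ := fun x => if |x| < β then 4*x^3 else 4*β^2*x with hg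
  -- Ψc equals the quartic on [-β, β]
  have heq : ∀ y : ℝ, |y| ≤ β → Ψc y = y^4 + 1 := by
    intro y hy
    rcases lt_or_eq_of_le hy with h | h
    · rw [hΨc y, if_pos h]
    · have h2 : y^2 = β^2 := by
        have := sq_abs y
        rw [h] at this; linarith
      rw [hΨc y, if_neg (by simp [h])]
      nlinarith [h2]
  have heq2 : ∀ y : ℝ, β ≤ |y| → Ψc y = 2*β^2*y^2 - (β^4 - 1) := fun y hy => by
    rw [hΨc y, if_neg (not_lt.2 hy)]
  have hq : ∀ x : ℝ, HasDerivAt (fun y : ℝ => y^4 + 1) (4*x^3) x := by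
    intro x
    simpa using ((hasDerivAt_pow 4 x).add_const 1)
  have hq2 : ∀ x : ℝ, HasDerivAt (fun y : ℝ => 2*β^2*y^2 - (β^4 - 1)) (4*β^2*x) x := by
    intro x
    have := ((hasDerivAt_pow 2 x).const_mul (2*β^2)).sub_const (β^4 - 1)
    exact this.congr_deriv (by ring)
  -- derivative at the right gluing point
  have keyR : HasDerivAt Ψc (4*β^3) β := by
    have hleft : HasDerivWithinAt Ψc (4*β^3) (Set.Iic β) β := by
      have hq' := (hq β).hasDerivWithinAt (s := Set.Iic β)
      apply hq'.congr_of_eventuallyEq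
      · filter_upwards [mem_nhdsWithin_of_mem_nhds
          ((isOpen_lt continuous_const continuous_id).mem_nhds
            (show -β < β by linarith)), self_mem_nhdsWithin] with y hy1 hy2
        exact heq y (abs_le.2 ⟨le_of_lt hy1, hy2⟩)
      · exact heq β (by rw [abs_of_pos hβ0])
    have hright : HasDerivWithinAt Ψc (4*β^3) (Set.Ici β) β := by
      have hq' := (hq2 β).hasDerivWithinAt (s := Set.Ici β)
      have h2 : HasDerivWithinAt Ψc (4*β^2*β) (Set.Ici β) β := by
        apply hq'.congr
        · intro y hy
          refine heq2 y ?_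
          have : β ≤ y := hy
          calc β ≤ y := this
          _ ≤ |y| := le_abs_self y
        · exact heq2 β (by rw [abs_of_pos hβ0])
      convert h2 using 1; ring
    have := hleft.union hright
    rw [Set.Iic_union_Ici, hasDerivWithinAt_univ] at this
    exact this
  have keyL : HasDerivAt Ψc (4*(-β)^3) (-β) := by
    have hleft : HasDerivWithinAt Ψc (4*(-β)^3) (Set.Iic (-β)) (-β) := by
      have hq' := (hq2 (-β)).hasDerivWithinAt (s := Set.Iic (-β))
      have h2 : HasDerivWithinAt Ψc (4*β^2*(-β)) (Set.Iic (-β)) (-β) := by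
        apply hq'.congr
        · intro y hy
          refine heq2 y ?_
          have hy' : y ≤ -β := hy
          rw [abs_of_nonpos (by linarith)]; linarith
        · exact heq2 (-β) (by rw [abs_neg, abs_of_pos hβ0])
      convert h2 using 1; ring
    have hright : HasDerivWithinAt Ψc (4*(-β)^3) (Set.Ici (-β)) (-β) := by
      have hq' := (hq (-β)).hasDerivWithinAt (s := Set.Ici (-β))
      apply hq'.congr_of_eventuallyEq
      · filter_upwards [mem_nhdsWithin_of_mem_nhds
          ((isOpen_lt continuous_id continuous_const).mem_nhds
            (show -β < β by linarith)), self_mem_nhdsWithin] with y hy1 hy2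
        exact heq y (abs_le.2 ⟨hy2, le_of_lt hy1⟩)
      · exact heq (-β) (by rw [abs_neg, abs_of_pos hβ0])
    have := hleft.union hright
    rw [Set.Iic_union_Ici, hasDerivWithinAt_univ] at this
    exact this
  have key : ∀ x : ℝ, HasDerivAt Ψc (g x) x := by
    intro x
    rcases lt_trichotomy (|x|) β with h | h | h
    · have hev : Ψc =ᶠ[nhds x] fun y => y^4 + 1 := by
        filter_upwards [(isOpen_lt continuous_abs continuous_const).mem_nhds h] with y hy
        exact heq y (le_of_lt hy)
      have h2 := (hq x).congr_of_eventuallyEq hev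
      have hgx : g x = 4*x^3 := by simp only [hg]; rw [if_pos h]
      rw [hgx]; exact h2
    · have hx2 : x = β ∨ x = -β := abs_eq (le_of_lt hβ0) |>.1 h
      rcases hx2 with h1 | h1
      · rw [h1]
        have hgx : g β = 4*β^3 := by
          simp only [hg]; rw [abs_of_pos hβ0, if_neg (lt_irrefl β)]; ring
        rw [hgx]; exact keyR
      · rw [h1]
        have hgx : g (-β) = 4*(-β)^3 := by
          simp only [hg]; rw [abs_neg, abs_of_pos hβ0, if_neg (lt_irrefl β)]; ring
        rw [hgx]; exact keyL
    · have hev : Ψc =ᶠ[nhds x] fun y => 2*β^2*y^2 - (β^4 - 1) := by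
        filter_upwards [(isOpen_lt continuous_const continuous_abs).mem_nhds h] with y hy
        exact heq2 y (le_of_lt hy)
      have h2 := (hq2 x).congr_of_eventuallyEq hev
      have hgx : g x = 4*β^2*x := by simp only [hg]; rw [if_neg (not_lt.2 (le_of_lt h))]
      rw [hgx]; exact h2
  have hdiff : Differentiable ℝ Ψc := fun x => (key x).differentiableAt
  have hderiv : deriv Ψc = g := funext fun x => (key x).deriv
  have hmono : Monotone g := by
    intro x y hxy
    simp only [hg]
    have hxy' : (0:ℝ) ≤ y - x := by linarith
    by_cases hx : |x| < β <;> by_cases hy : |y| < β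
    · rw [if_pos hx, if_pos hy]
      nlinarith [mul_nonneg hxy' (sq_nonneg (x+y)), mul_nonneg hxy' (sq_nonneg x),
        mul_nonneg hxy' (sq_nonneg y)]
    · rw [if_pos hx, if_neg hy]
      have hxb : x < β := lt_of_le_of_lt (le_abs_self x) hx
      have hyb : β ≤ y := by
        rcases le_or_gt β y with h1 | h1
        · exact h1
        · exact absurd (abs_lt.2 ⟨by linarith [(abs_lt.1 hx).1], h1⟩) hy
      nlinarith [mul_nonneg (by linarith : (0:ℝ) ≤ β - x) (sq_nonneg (x+β)),
        mul_nonneg (by linarith : (0:ℝ) ≤ β - x) (sq_nonneg x),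
        mul_nonneg (by linarith : (0:ℝ) ≤ β - x) (sq_nonneg β),
        mul_nonneg (sq_nonneg β) (by linarith : (0:ℝ) ≤ y - β)]
    · rw [if_neg hx, if_pos hy]
      have hyb : -β < y := (abs_lt.1 hy).1
      have hxb : x ≤ -β := by
        rcases le_or_gt x (-β) with h1 | h1
        · exact h1
        · exact absurd (abs_lt.2 ⟨h1, lt_of_le_of_lt hxy (abs_lt.1 hy).2⟩) hx
      nlinarith [mul_nonneg (by linarith : (0:ℝ) ≤ y + β) (sq_nonneg (y-β)),
        mul_nonneg (by linarith : (0:ℝ) ≤ y + β) (sq_nonneg y),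
        mul_nonneg (by linarith : (0:ℝ) ≤ y + β) (sq_nonneg β),
        mul_nonneg (sq_nonneg β) (by linarith : (0:ℝ) ≤ -β - x)]
    · rw [if_neg hx, if_neg hy]
      nlinarith [mul_nonneg (sq_nonneg β) hxy']
  exact Monotone.convexOn_univ_of_deriv hdiff (by rw [hderiv]; exact hmono)
end

section
/- Abstract energy dissipation: let H(x) = D(x) + E(x) - L(x) where D(x) ≥ 0 with D(x₀) = 0, E = E_c - E_e with E_e convex differentiable and L(x) = ⟨E_e'(x₀), x⟩ (Gâteaux derivative at x₀). If x* minimizes H over a set containing x₀, then E(x*) ≤ E(x₀). -/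
theorem stmt_7 {X : Type*} [NormedAddCommGroup X] [NormedSpace ℝ X]
    (S : Set X) (x₀ : X) (hx₀ : x₀ ∈ S)
    (D Ec Ee : X → ℝ)
    (hD : ∀ x, 0 ≤ D x) (hD0 : D x₀ = 0)
    (hEe : ConvexOn ℝ Set.univ Ee)
    (L : X →L[ℝ] ℝ) (hL : HasFDerivAt Ee L x₀)
    (xs : X) (hxs : xs ∈ S)
    (hmin : ∀ x ∈ S, D xs + Ec xs - L xs ≤ D x + Ec x - L x) :
    Ec xs - Ee xs ≤ Ec x₀ - Ee x₀ := by
  -- key: L (xs - x₀) ≤ Ee xs - Ee x₀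
  have key : L (xs - x₀) ≤ Ee xs - Ee x₀ := by
    set v := xs - x₀ with hv
    set g : ℝ → ℝ := fun t => Ee (x₀ + t • v) with hg
    have hgd : HasDerivAt g (L v) 0 := by
      have := hL.hasLineDerivAt v
      simpa [HasLineDerivAt, hg] using this
    have htend : Filter.Tendsto (slope g 0) (nhdsWithin 0 {(0:ℝ)}ᶜ) (nhds (L v)) :=
      hasDerivAt_iff_tendsto_slope.mp hgd
    have htend' : Filter.Tendsto (slope g 0) (nhdsWithin 0 (Set.Ioi 0)) (nhds (L v)) :=
      htend.mono_left (nhdsWithin_mono 0 (fun t ht => ne_of_gt ht))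
    have hbound : ∀ᶠ t in nhdsWithin (0:ℝ) (Set.Ioi 0), slope g 0 t ≤ Ee xs - Ee x₀ := by
      filter_upwards [Ioo_mem_nhdsGT_of_mem (by norm_num : (0:ℝ) ∈ Set.Ico 0 1)] with t ht
      have ht0 : 0 < t := ht.1
      have ht1 : t < 1 := ht.2
      have hconv := hEe.2 (Set.mem_univ x₀) (Set.mem_univ xs)
        (by linarith : (0:ℝ) ≤ 1 - t) (le_of_lt ht0) (by ring)
      have hpt : x₀ + t • v = (1 - t) • x₀ + t • xs := by
        simp [hv, smul_sub]; module
      have hgle : g t ≤ (1 - t) * Ee x₀ + t * Ee xs := by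
        rw [hg]; simp only; rw [hpt]; simpa using hconv
      have hg0 : g 0 = Ee x₀ := by simp [hg]
      rw [slope_def_field, sub_zero, div_le_iff₀ ht0]
      nlinarith [hgle, hg0]
    exact le_of_tendsto htend' hbound
  have hm := hmin x₀ hx₀
  have hL' : L (xs - x₀) = L xs - L x₀ := by simp
  have := hD xs
  linarith [key, hm, hL', hD0, this, (by rw [hL'] at key; linarith : L xs - L x₀ ≤ Ee xs - Ee x₀)]
end
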